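/- Let p = 2 and let L be a non-degenerate even lattice over ℤ₂ containing V = [[2,1],[1,2]] as an orthogonal direct summand. Then for every x ∈ ℤ₂^×, V contains a vector v with ⟨v,v⟩ ∈ 2ℤ₂^×, and the reflection T(v) lies in the kernel of O(L) → O(q(L)); the subgroup of {±1} × ℚ₂^×/(ℚ₂^×)² generated by the values (det T(v), θ₂(T(v))) over such v contains the subgroup J₂ generated by {1} × ℤ₂^×/(ℤ₂^×)² and (−1, 2 mod squares). -/

import Mathlib

open Matrix

/-- The bilinear form on `ℚ₂ⁿ` associated to a Gram matrix `M` over `ℤ₂`. -/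
noncomputable def dyadicForm {n : Type*} [Fintype n] (M : Matrix n n ℤ_[2])
    (x y : n → ℚ_[2]) : ℚ_[2] :=
  dotProduct x ((M.map (PadicInt.Coe.ringHom : ℤ_[2] →+* ℚ_[2])).mulVec y)

/-- The lattice `ℤ₂ⁿ` inside `ℚ₂ⁿ`. -/
def dyadicIntVecs (n : Type*) : Set (n → ℚ_[2]) :=
  {x | ∀ i, ∃ a : ℤ_[2], (a : ℚ_[2]) = x i}

/-- The reflection `T(v) : w ↦ w − (2⟨v,w⟩/⟨v,v⟩)·v` on `ℚ₂ⁿ`. -/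
noncomputable def dyadicReflection {n : Type*} [Fintype n] (M : Matrix n n ℤ_[2])
    (v w : n → ℚ_[2]) : n → ℚ_[2] :=
  w - (2 * dyadicForm M v w / dyadicForm M v v) • v

namespace DyadicAux

lemma unit_iff_not_dvd (z : ℤ_[2]) : IsUnit z ↔ ¬ (2:ℤ_[2]) ∣ z := by
  have h := PadicInt.norm_lt_one_iff_dvd z
  simp only [Nat.cast_ofNat] at h
  rw [← h, ← PadicInt.not_isUnit_iff, not_not]

lemma sq_of_eight (a b : ℤ_[2]) (h : a - 1 = 8 * b) : ∃ z : ℤ_[2], z ^ 2 = a := by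
  have h2 : ‖(2:ℤ_[2])‖ = 1/2 := by
    have := PadicInt.norm_p (p := 2); norm_num at this ⊢; exact_mod_cast this
  have hn : ‖Polynomial.eval 1 (Polynomial.X^2 - Polynomial.C a)‖ <
      ‖Polynomial.eval 1 (Polynomial.derivative (Polynomial.X^2 - Polynomial.C a))‖ ^ 2 := by
    have h8 : ‖(8:ℤ_[2])‖ = 1/8 := by
      have h3 : (8:ℤ_[2]) = 2^3 := by norm_num
      rw [h3, norm_pow, h2]; norm_num
    simp only [Polynomial.derivative_sub, Polynomial.derivative_pow, Polynomial.derivative_X,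
      Polynomial.derivative_C, Polynomial.eval_sub, Polynomial.eval_pow, Polynomial.eval_X,
      Polynomial.eval_C, Polynomial.eval_mul, sub_zero, Polynomial.eval_ofNat,
      Polynomial.eval_one, mul_one, one_pow]
    have he : (1:ℤ_[2]) - a = -(8*b) := by rw [← h]; ring
    rw [he, norm_neg, norm_mul, h8]
    have : ‖((2:ℕ):ℤ_[2])‖ = 1/2 := by exact_mod_cast h2
    calc (1:ℝ)/8 * ‖b‖ ≤ 1/8 * 1 :=
          mul_le_mul_of_nonneg_left (PadicInt.norm_le_one b) (by norm_num)
      _ < _ := by rw [this]; norm_num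
  obtain ⟨z, hz, -⟩ := hensels_lemma hn
  exact ⟨z, by simpa [sub_eq_zero] using hz⟩

lemma toZMod_zero_iff (z : ℤ_[2]) : PadicInt.toZMod z = 0 ↔ ¬ IsUnit z := by
  have h1 : PadicInt.toZMod z = 0 ↔ z ∈ RingHom.ker (PadicInt.toZMod : ℤ_[2] →+* ZMod 2) :=
    Iff.rfl
  rw [h1, PadicInt.ker_toZMod, IsLocalRing.mem_maximalIdeal, mem_nonunits_iff]

lemma isUnit_iff_toZMod (z : ℤ_[2]) : IsUnit z ↔ PadicInt.toZMod z ≠ 0 := by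
  rw [Ne, toZMod_zero_iff, not_not]

lemma isUnit_one_add (x : ℤ_[2]) (hx : IsUnit x) : IsUnit (1 + x + x^2) := by
  rw [isUnit_iff_toZMod] at hx ⊢
  simp only [map_add, _root_.map_one, map_pow]
  have key : ∀ s : ZMod 2, s ≠ 0 → 1 + s + s^2 ≠ 0 := by decide
  exact key _ hx

lemma isUnit_three : IsUnit (3 : ℤ_[2]) := by
  rw [isUnit_iff_toZMod]; rw [show (3:ℤ_[2]) = ((3:ℕ):ℤ_[2]) by norm_num, map_natCast]; decide

lemma isUnit_five : IsUnit (5 : ℤ_[2]) := by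
  rw [isUnit_iff_toZMod]; rw [show (5:ℤ_[2]) = ((5:ℕ):ℤ_[2]) by norm_num, map_natCast]; decide

lemma residue8 (a : ℤ_[2]) : ∃ k : ℤ_[2],
    a = (((PadicInt.toZModPow 3 a).val : ℕ) : ℤ_[2]) + 8 * k := by
  set r := PadicInt.toZModPow 3 a with hr
  have hker : a - ((r.val : ℕ) : ℤ_[2]) ∈
      RingHom.ker (PadicInt.toZModPow 3 : ℤ_[2] →+* ZMod (2^3)) := by
    show PadicInt.toZModPow 3 (a - _) = 0
    rw [map_sub, map_natCast, ZMod.natCast_val, ZMod.cast_id, ← hr, sub_self]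
  rw [PadicInt.ker_toZModPow, Ideal.mem_span_singleton] at hker
  obtain ⟨k, hk⟩ := hker
  refine ⟨k, ?_⟩
  have h2 : ((2:ℕ):ℤ_[2])^3 = 8 := by norm_num
  rw [h2] at hk
  linear_combination hk

lemma val_lt8 (a : ℤ_[2]) : (PadicInt.toZModPow 3 a).val < 8 := by
  have := ZMod.val_lt (PadicInt.toZModPow 3 a)
  simpa using this

lemma pick (a : ℤ_[2]ˣ) (x : ℤ_[2]) (hx : IsUnit x)
    (h8 : ∃ t : ℤ_[2], (1 + x + x^2) - (a : ℤ_[2]) = 8 * t) :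
    ∃ (w : ℤ_[2]ˣ) (z : ℤ_[2]),
      (a : ℤ_[2]) * z^2 = 1 + (w : ℤ_[2]) + (w : ℤ_[2])^2 := by
  obtain ⟨t, ht⟩ := h8
  have hinv : (a : ℤ_[2]) * ((a⁻¹ : ℤ_[2]ˣ) : ℤ_[2]) = 1 := by
    exact_mod_cast a.mul_inv
  have hb : (1 + x + x^2) * ((a⁻¹ : ℤ_[2]ˣ) : ℤ_[2]) - 1 = 8 * (t * ((a⁻¹ : ℤ_[2]ˣ) : ℤ_[2])) := by
    linear_combination ((a⁻¹ : ℤ_[2]ˣ) : ℤ_[2]) * ht + hinv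
  obtain ⟨z, hz⟩ := sq_of_eight _ _ hb
  refine ⟨hx.unit, z, ?_⟩
  have hs : (hx.unit : ℤ_[2]) = x := hx.unit_spec
  rw [hs]
  linear_combination (a:ℤ_[2]) * hz + (1 + x + x^2) * hinv

lemma core (a : ℤ_[2]ˣ) :
    ∃ (w : ℤ_[2]ˣ) (z : ℤ_[2]),
      (a : ℤ_[2]) * z^2 = 1 + (w : ℤ_[2]) + (w : ℤ_[2])^2 := by
  obtain ⟨k, hk⟩ := residue8 (a : ℤ_[2])
  set m := (PadicInt.toZModPow 3 (a : ℤ_[2])).val with hm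
  have hlt : m < 8 := val_lt8 _
  have hodd : m % 2 = 1 := by
    rcases Nat.even_or_odd m with he | ho
    · exfalso
      obtain ⟨j, hj⟩ := he
      have : (2:ℤ_[2]) ∣ (a : ℤ_[2]) := by
        refine ⟨(j : ℤ_[2]) + 4 * k, ?_⟩
        rw [hk, hj]
        push_cast
        ring
      exact ((unit_iff_not_dvd _).mp a.isUnit) this
    · exact Nat.odd_iff.mp ho
  interval_cases m
  · exact absurd hodd (by decide)
  · exact pick a (-1) (IsUnit.neg isUnit_one) ⟨-k, by rw [hk]; push_cast; ring⟩
  · exact absurd hodd (by decide)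
  · exact pick a 1 isUnit_one ⟨-k, by rw [hk]; push_cast; ring⟩
  · exact absurd hodd (by decide)
  · exact pick a 3 isUnit_three ⟨1 - k, by rw [hk]; push_cast; ring⟩
  · exact absurd hodd (by decide)
  · exact pick a 5 isUnit_five ⟨3 - k, by rw [hk]; push_cast; ring⟩

lemma ringHom_apply (z : ℤ_[2]) : (PadicInt.Coe.ringHom : ℤ_[2] →+* ℚ_[2]) z = (z : ℚ_[2]) := rfl

lemma coe_sum {ι : Type*} (s : Finset ι) (f : ι → ℤ_[2]) :
    ((∑ i ∈ s, f i : ℤ_[2]) : ℚ_[2]) = ∑ i ∈ s, ((f i : ℤ_[2]) : ℚ_[2]) :=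
  map_sum (PadicInt.Coe.ringHom : ℤ_[2] →+* ℚ_[2]) f s

lemma form_cast {n : Type*} [Fintype n] (M : Matrix n n ℤ_[2]) (a b : n → ℤ_[2]) :
    dyadicForm M (fun i => ((a i : ℤ_[2]) : ℚ_[2])) (fun i => ((b i : ℤ_[2]) : ℚ_[2])) =
      ((dotProduct a (M.mulVec b) : ℤ_[2]) : ℚ_[2]) := by
  simp only [dyadicForm, dotProduct, Matrix.mulVec, Matrix.map_apply, ringHom_apply,
    coe_sum, PadicInt.coe_mul]

lemma form_comm {n : Type*} [Fintype n] (M : Matrix n n ℤ_[2]) (h : M.transpose = M)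
    (a b : n → ℚ_[2]) : dyadicForm M a b = dyadicForm M b a := by
  simp only [dyadicForm, dotProduct, Matrix.mulVec, Matrix.map_apply, Finset.mul_sum]
  rw [Finset.sum_comm]
  refine Finset.sum_congr rfl fun j _ => Finset.sum_congr rfl fun i _ => ?_
  have hij : M i j = M j i := by conv_lhs => rw [← h, Matrix.transpose_apply]
  rw [hij]; ring

lemma dotp {n : ℕ} (M' : Matrix (Fin n) (Fin n) ℤ_[2]) (x : ℤ_[2]ˣ) :
    dotProduct (Sum.elim ![1, (x : ℤ_[2])] 0)
      ((Matrix.fromBlocks !![(2 : ℤ_[2]), 1; 1, 2] 0 0 M').mulVec (Sum.elim ![1, (x : ℤ_[2])] 0))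
      = 2 + 2 * (x : ℤ_[2]) + 2 * (x : ℤ_[2]) ^ 2 := by
  simp [Matrix.mulVec, dotProduct, Fintype.sum_sum_type, Fin.sum_univ_two, Matrix.fromBlocks]
  ring

lemma scalar_eq (s : ℤ_[2]) (hs : IsUnit s) (uinv : ℤ_[2]) (hui : s * uinv = 1) (F : ℚ_[2]) :
    2 * F / (((2 * s : ℤ_[2]) : ℚ_[2])) = F * (uinv : ℚ_[2]) := by
  have h1 : ((s : ℚ_[2])) * ((uinv : ℚ_[2])) = 1 := by exact_mod_cast congrArg _ hui
  have hs0 : (s : ℚ_[2]) ≠ 0 := PadicInt.coe_ne_zero.mpr hs.ne_zero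
  have h2 : ((2 * s : ℤ_[2]) : ℚ_[2]) = 2 * (s : ℚ_[2]) := by
    rw [PadicInt.coe_mul, show (2:ℤ_[2]) = 1+1 by norm_num, PadicInt.coe_add, PadicInt.coe_one]
    norm_num
  rw [h2, div_eq_iff (by simp [hs0] : (2:ℚ_[2]) * (s:ℚ_[2]) ≠ 0)]
  linear_combination (-2) * F * h1

end DyadicAux

namespace DyadicAux

lemma coe_two : ((2:ℤ_[2]):ℚ_[2]) = 2 := by
  rw [show (2:ℤ_[2]) = 1+1 by norm_num, PadicInt.coe_add, PadicInt.coe_one]; norm_num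

lemma neg_one_val : ((-1 : ℤ_[2]ˣ) : ℤ_[2]) = -1 := by simp

end DyadicAux


open DyadicAux

/-- Let `L` be a non-degenerate even lattice over `ℤ₂` containing
`V = [[2,1],[1,2]]` as an orthogonal direct summand, with Gram matrix `V ⊕ M'`.
For every `x ∈ ℤ₂^×` the vector `v = e₁ + x·e₂ ∈ V` has
`⟨v,v⟩ = 2 + 2x + 2x² ∈ 2ℤ₂^×`; the reflection `T(v)` preserves `L` and lies in
the kernel of `O(L) → O(q(L))` (it acts trivially on `L^∨/L`); and the subgroup of
`{±1} × ℚ₂^×/(ℚ₂^×)²` generated by the values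
`(det T(v), θ₂(T(v))) = (−1, ⟨v,v⟩ mod squares)` contains the subgroup `J₂`
generated by `{1} × ℤ₂^×/(ℤ₂^×)²` and `(−1, 2 mod squares)`. -/
theorem dyadic_V_reflections
    {n : ℕ}
    (M' : Matrix (Fin n) (Fin n) ℤ_[2]) (hsymm : M'.transpose = M')
    (heven : ∀ i, ∃ a : ℤ_[2], M' i i = 2 * a)
    (hdet : (Matrix.fromBlocks !![(2 : ℤ_[2]), 1; 1, 2] 0 0 M').det ≠ 0) :
    letI M : Matrix (Fin 2 ⊕ Fin n) (Fin 2 ⊕ Fin n) ℤ_[2] :=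
      Matrix.fromBlocks !![(2 : ℤ_[2]), 1; 1, 2] 0 0 M'
    letI vx : ℤ_[2]ˣ → (Fin 2 ⊕ Fin n) → ℤ_[2] :=
      fun x => Sum.elim ![1, (x : ℤ_[2])] 0
    letI vxQ : ℤ_[2]ˣ → (Fin 2 ⊕ Fin n) → ℚ_[2] :=
      fun x i => ((vx x i : ℤ_[2]) : ℚ_[2])
    letI sq : Subgroup ℚ_[2]ˣ := (powMonoidHom 2 : ℚ_[2]ˣ →* ℚ_[2]ˣ).range
    (∀ x : ℤ_[2]ˣ,
      dotProduct (vx x) (M.mulVec (vx x)) = 2 + 2 * (x : ℤ_[2]) + 2 * (x : ℤ_[2]) ^ 2 ∧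
      ∃ u : ℤ_[2]ˣ, dotProduct (vx x) (M.mulVec (vx x)) = 2 * (u : ℤ_[2])) ∧
    (∀ x : ℤ_[2]ˣ,
      (∀ w ∈ dyadicIntVecs (Fin 2 ⊕ Fin n),
        dyadicReflection M (vxQ x) w ∈ dyadicIntVecs (Fin 2 ⊕ Fin n)) ∧
      (∀ w : (Fin 2 ⊕ Fin n) → ℚ_[2],
        (∀ y ∈ dyadicIntVecs (Fin 2 ⊕ Fin n),
          ∃ c : ℤ_[2], (c : ℚ_[2]) = dyadicForm M w y) →
        dyadicReflection M (vxQ x) w - w ∈ dyadicIntVecs (Fin 2 ⊕ Fin n))) ∧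
    Subgroup.closure
        ({z : ℤˣ × (ℚ_[2]ˣ ⧸ sq) |
          ∃ (a : ℤ_[2]ˣ) (u : ℚ_[2]ˣ), (u : ℚ_[2]) = ((a : ℤ_[2]) : ℚ_[2]) ∧
            z = ((1 : ℤˣ), QuotientGroup.mk u)} ∪
         {z | ∃ u : ℚ_[2]ˣ, (u : ℚ_[2]) = 2 ∧ z = ((-1 : ℤˣ), QuotientGroup.mk u)}) ≤
      Subgroup.closure
        {z : ℤˣ × (ℚ_[2]ˣ ⧸ sq) |
          ∃ (x : ℤ_[2]ˣ) (u : ℚ_[2]ˣ),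
            (u : ℚ_[2]) = ((dotProduct (vx x) (M.mulVec (vx x)) : ℤ_[2]) : ℚ_[2]) ∧
            z = ((-1 : ℤˣ), QuotientGroup.mk u)} := by
  show
    let M : Matrix (Fin 2 ⊕ Fin n) (Fin 2 ⊕ Fin n) ℤ_[2] :=
      Matrix.fromBlocks !![(2 : ℤ_[2]), 1; 1, 2] 0 0 M'
    let vx : ℤ_[2]ˣ → (Fin 2 ⊕ Fin n) → ℤ_[2] :=
      fun x => Sum.elim ![1, (x : ℤ_[2])] 0
    let vxQ : ℤ_[2]ˣ → (Fin 2 ⊕ Fin n) → ℚ_[2] :=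
      fun x i => ((vx x i : ℤ_[2]) : ℚ_[2])
    let sq : Subgroup ℚ_[2]ˣ := (powMonoidHom 2 : ℚ_[2]ˣ →* ℚ_[2]ˣ).range
    (∀ x : ℤ_[2]ˣ,
      dotProduct (vx x) (M.mulVec (vx x)) = 2 + 2 * (x : ℤ_[2]) + 2 * (x : ℤ_[2]) ^ 2 ∧
      ∃ u : ℤ_[2]ˣ, dotProduct (vx x) (M.mulVec (vx x)) = 2 * (u : ℤ_[2])) ∧
    (∀ x : ℤ_[2]ˣ,
      (∀ w ∈ dyadicIntVecs (Fin 2 ⊕ Fin n),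
        dyadicReflection M (vxQ x) w ∈ dyadicIntVecs (Fin 2 ⊕ Fin n)) ∧
      (∀ w : (Fin 2 ⊕ Fin n) → ℚ_[2],
        (∀ y ∈ dyadicIntVecs (Fin 2 ⊕ Fin n),
          ∃ c : ℤ_[2], (c : ℚ_[2]) = dyadicForm M w y) →
        dyadicReflection M (vxQ x) w - w ∈ dyadicIntVecs (Fin 2 ⊕ Fin n))) ∧
    Subgroup.closure
        ({z : ℤˣ × (ℚ_[2]ˣ ⧸ sq) |
          ∃ (a : ℤ_[2]ˣ) (u : ℚ_[2]ˣ), (u : ℚ_[2]) = ((a : ℤ_[2]) : ℚ_[2]) ∧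
            z = ((1 : ℤˣ), QuotientGroup.mk u)} ∪
         {z | ∃ u : ℚ_[2]ˣ, (u : ℚ_[2]) = 2 ∧ z = ((-1 : ℤˣ), QuotientGroup.mk u)}) ≤
      Subgroup.closure
        {z : ℤˣ × (ℚ_[2]ˣ ⧸ sq) |
          ∃ (x : ℤ_[2]ˣ) (u : ℚ_[2]ˣ),
            (u : ℚ_[2]) = ((dotProduct (vx x) (M.mulVec (vx x)) : ℤ_[2]) : ℚ_[2]) ∧
            z = ((-1 : ℤˣ), QuotientGroup.mk u)}
  intro M vx vxQ sq
  have hdotp : ∀ x : ℤ_[2]ˣ,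
      dotProduct (vx x) (M.mulVec (vx x)) = 2 + 2 * (x : ℤ_[2]) + 2 * (x : ℤ_[2]) ^ 2 :=
    fun x => DyadicAux.dotp M' x
  have hMt : M.transpose = M := by
    show (Matrix.fromBlocks !![(2 : ℤ_[2]), 1; 1, 2] 0 0 M').transpose = _
    rw [Matrix.fromBlocks_transpose, Matrix.transpose_zero, Matrix.transpose_zero, hsymm,
      show (!![(2:ℤ_[2]), 1; 1, 2]).transpose = !![(2:ℤ_[2]), 1; 1, 2] from by
        ext i j; fin_cases i <;> fin_cases j <;> rfl]
  refine ⟨?_, ?_, ?_⟩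
  · -- Part 1
    intro x
    refine ⟨hdotp x, (isUnit_one_add _ x.isUnit).unit, ?_⟩
    rw [hdotp x, IsUnit.unit_spec]
    ring
  · -- Part 2
    intro x
    have hsu : IsUnit (1 + (x:ℤ_[2]) + (x:ℤ_[2])^2) := isUnit_one_add _ x.isUnit
    set s : ℤ_[2] := 1 + (x:ℤ_[2]) + (x:ℤ_[2])^2 with hsdef
    set u : ℤ_[2] := ((hsu.unit⁻¹ : ℤ_[2]ˣ) : ℤ_[2]) with hudef
    have hui : s * u = 1 := by
      have h := hsu.unit.mul_inv
      have h2 : ((hsu.unit : ℤ_[2]ˣ) : ℤ_[2]) * u = 1 := by exact_mod_cast h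
      rwa [hsu.unit_spec] at h2
    have hvv : dyadicForm M (vxQ x) (vxQ x) = ((2 * s : ℤ_[2]) : ℚ_[2]) := by
      have h := form_cast M (vx x) (vx x)
      show dyadicForm M (fun i => ((vx x i : ℤ_[2]) : ℚ_[2]))
        (fun i => ((vx x i : ℤ_[2]) : ℚ_[2])) = _
      rw [h, hdotp x]
      exact congrArg _ (by rw [hsdef]; ring)
    constructor
    · intro w hw
      choose w' hwc using hw
      have hwe : w = fun i => ((w' i : ℤ_[2]) : ℚ_[2]) := funext fun i => (hwc i).symm
      have hf : dyadicForm M (vxQ x) w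
          = ((dotProduct (vx x) (M.mulVec w') : ℤ_[2]) : ℚ_[2]) := by
        rw [hwe]
        exact form_cast M (vx x) w'
      intro i
      refine ⟨w' i - (dotProduct (vx x) (M.mulVec w')) * u * vx x i, ?_⟩
      show _ = (w - (2 * dyadicForm M (vxQ x) w / dyadicForm M (vxQ x) (vxQ x)) • vxQ x) i
      rw [hvv, hf, scalar_eq s hsu u hui]
      rw [Pi.sub_apply, Pi.smul_apply, smul_eq_mul, hwe]
      show ((_ : ℤ_[2]) : ℚ_[2]) = _ - _ * ((vx x i : ℤ_[2]) : ℚ_[2])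
      push_cast
      ring
    · intro w hw
      obtain ⟨c, hc⟩ := hw (vxQ x) (fun i => ⟨vx x i, rfl⟩)
      have hsym : dyadicForm M (vxQ x) w = (c : ℚ_[2]) := by
        rw [form_comm M hMt, ← hc]
      intro i
      refine ⟨-(c * u * vx x i), ?_⟩
      show _ = ((w - (2 * dyadicForm M (vxQ x) w / dyadicForm M (vxQ x) (vxQ x)) • vxQ x) - w) i
      rw [Pi.sub_apply, Pi.sub_apply, Pi.smul_apply, smul_eq_mul, hvv, hsym,
        scalar_eq s hsu u hui]
      show ((_ : ℤ_[2]) : ℚ_[2]) = _ - _ * ((vx x i : ℤ_[2]) : ℚ_[2]) - _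
      push_cast
      ring
  · -- Part 3
    rw [Subgroup.closure_le]
    rintro z (⟨a, ua, hua, rfl⟩ | ⟨u, hu, rfl⟩)
    · -- (1, mk ua) with ↑ua = ↑a
      obtain ⟨w, zz, hzz⟩ := core a
      have hsu : IsUnit (1 + (w:ℤ_[2]) + (w:ℤ_[2])^2) := isUnit_one_add _ w.isUnit
      have hs0 : ((1 + (w:ℤ_[2]) + (w:ℤ_[2])^2 : ℤ_[2]) : ℚ_[2]) ≠ 0 :=
        PadicInt.coe_ne_zero.mpr hsu.ne_zero
      have ha0 : (((a:ℤ_[2]) : ℤ_[2]) : ℚ_[2]) ≠ 0 :=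
        PadicInt.coe_ne_zero.mpr a.isUnit.ne_zero
      have hzz0 : ((zz : ℤ_[2]) : ℚ_[2]) ≠ 0 := by
        refine PadicInt.coe_ne_zero.mpr fun h0 => hsu.ne_zero ?_
        rw [h0] at hzz
        linear_combination -hzz
      have hdw : dotProduct (vx w) (M.mulVec (vx w))
          = 2 * (1 + (w:ℤ_[2]) + (w:ℤ_[2])^2) := by rw [hdotp w]; ring
      have hdw0 : ((dotProduct (vx w) (M.mulVec (vx w)) : ℤ_[2]) : ℚ_[2]) ≠ 0 := by
        refine PadicInt.coe_ne_zero.mpr ?_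
        rw [hdw]
        exact mul_ne_zero two_ne_zero hsu.ne_zero
      have hd1 : dotProduct (vx (-1)) (M.mulVec (vx (-1))) = 2 := by
        rw [hdotp (-1), neg_one_val]; ring
      have hd10 : ((dotProduct (vx (-1)) (M.mulVec (vx (-1))) : ℤ_[2]) : ℚ_[2]) ≠ 0 := by
        rw [hd1, coe_two]; norm_num
      set Uw : ℚ_[2]ˣ := Units.mk0 _ hdw0 with hUw
      set U1 : ℚ_[2]ˣ := Units.mk0 _ hd10 with hU1
      have mw : ((-1:ℤˣ), (QuotientGroup.mk Uw : ℚ_[2]ˣ ⧸ sq)) ∈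
          Subgroup.closure {z : ℤˣ × (ℚ_[2]ˣ ⧸ sq) |
            ∃ (x : ℤ_[2]ˣ) (u : ℚ_[2]ˣ),
              (u : ℚ_[2]) = ((dotProduct (vx x) (M.mulVec (vx x)) : ℤ_[2]) : ℚ_[2]) ∧
              z = ((-1 : ℤˣ), QuotientGroup.mk u)} :=
        Subgroup.subset_closure ⟨w, Uw, rfl, rfl⟩
      have m1 : ((-1:ℤˣ), (QuotientGroup.mk U1 : ℚ_[2]ˣ ⧸ sq)) ∈
          Subgroup.closure {z : ℤˣ × (ℚ_[2]ˣ ⧸ sq) |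
            ∃ (x : ℤ_[2]ˣ) (u : ℚ_[2]ˣ),
              (u : ℚ_[2]) = ((dotProduct (vx x) (M.mulVec (vx x)) : ℤ_[2]) : ℚ_[2]) ∧
              z = ((-1 : ℤˣ), QuotientGroup.mk u)} :=
        Subgroup.subset_closure ⟨-1, U1, rfl, rfl⟩
      have hmul := Subgroup.mul_mem _ mw m1
      have heq : ((1:ℤˣ), (QuotientGroup.mk ua : ℚ_[2]ˣ ⧸ sq)) =
          ((-1:ℤˣ), (QuotientGroup.mk Uw : ℚ_[2]ˣ ⧸ sq)) *
          ((-1:ℤˣ), (QuotientGroup.mk U1 : ℚ_[2]ˣ ⧸ sq)) := by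
        rw [Prod.mk_mul_mk]
        refine Prod.ext (by norm_num) ?_
        show (QuotientGroup.mk ua : ℚ_[2]ˣ ⧸ sq) = QuotientGroup.mk (Uw * U1)
        rw [QuotientGroup.eq]
        have hz2 : ((2 : ℚ_[2]) * ((zz : ℤ_[2]) : ℚ_[2])) ≠ 0 :=
          mul_ne_zero two_ne_zero hzz0
        refine ⟨Units.mk0 _ hz2, ?_⟩
        show (Units.mk0 _ hz2) ^ 2 = ua⁻¹ * (Uw * U1)
        have hzzQ : (((a:ℤ_[2]) : ℤ_[2]) : ℚ_[2]) * ((zz : ℤ_[2]) : ℚ_[2])^2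
            = 1 + (((w:ℤ_[2]) : ℤ_[2]) : ℚ_[2]) + (((w:ℤ_[2]) : ℤ_[2]) : ℚ_[2])^2 := by
          exact_mod_cast congrArg (fun t : ℤ_[2] => (t : ℚ_[2])) hzz
        have hcw : ((dotProduct (vx w) (M.mulVec (vx w)) : ℤ_[2]) : ℚ_[2])
            = 2 * (1 + (((w:ℤ_[2]) : ℤ_[2]) : ℚ_[2]) + (((w:ℤ_[2]) : ℤ_[2]) : ℚ_[2])^2) := by
          rw [hdw]
          push_cast [coe_two]
          ring
        have hc1 : ((dotProduct (vx (-1)) (M.mulVec (vx (-1))) : ℤ_[2]) : ℚ_[2]) = 2 := by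
          rw [hd1, coe_two]
        apply Units.ext
        simp only [Units.val_pow_eq_pow_val, Units.val_mul, Units.val_inv_eq_inv_val,
          Units.val_mk0, hUw, hU1]
        rw [hua, hcw, hc1]
        have hs0' : 1 + (((w:ℤ_[2]) : ℤ_[2]) : ℚ_[2]) + (((w:ℤ_[2]) : ℤ_[2]) : ℚ_[2])^2 ≠ 0 := by
          intro h0
          apply hs0
          push_cast
          exact h0
        field_simp
        linear_combination (1 : ℚ_[2]) * hzzQ
      rw [heq]
      exact hmul
    · -- (-1, mk u) with ↑u = 2
      apply Subgroup.subset_closure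
      refine ⟨-1, u, ?_, rfl⟩
      rw [hu, hdotp (-1), neg_one_val,
        show (2:ℤ_[2]) + 2 * (-1) + 2 * (-1)^2 = 2 by ring, coe_two]
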